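/- Triangle inequality for energetic costs: let G = (V, A, c) be a finite weighted directed graph with no negative cycles, B > 0, and s ∈ V. Then for every arc uv ∈ A, δ_B(s, v) ≤ δ_B(s, u) ⊕_B c(uv). -/
import Mathlib


open scoped Classical

/-- The clamped addition `x ⊕_B y = [x + y]₀ᴮ` on `ℝ ∪ {∞}` (modeled inside `EReal`;
inputs are never `⊥`). -/
noncomputable def eplus (B : ℝ) (x y : EReal) : EReal :=
  if x + y < 0 then 0 else if x + y ≤ (B : EReal) then x + y else ⊤

/-- `batt B b cst i` is the charge `b_i` of the battery after traversing the first `i`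
arcs of a path whose `i`-th arc (0-indexed) has cost `cst i`, starting from charge `b`. -/
noncomputable def batt (B b : ℝ) (cst : ℕ → ℝ) : ℕ → ℝ
  | 0 => b
  | i + 1 => min (batt B b cst i - cst i) B

/-- The path with arc costs `cst 0, …, cst (k-1)` is traversable from initial charge `b`. -/
def Trav (B b : ℝ) (cst : ℕ → ℝ) (k : ℕ) : Prop :=
  ∀ i, i < k → cst i ≤ batt B b cst i

/-- The energetic cost `d_{B,b}(P) = b - b_k` of a path with arc costs
`cst 0, …, cst (k-1)`, or `∞` if not traversable from initial charge `b`. -/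
noncomputable def dE (B b : ℝ) (cst : ℕ → ℝ) (k : ℕ) : EReal :=
  if Trav B b cst k then ((b - batt B b cst k : ℝ) : EReal) else ⊤

/-- `u 0, u 1, …, u k` is a path in the graph with arc relation `Arc`. -/
def IsPath {V : Type*} (Arc : V → V → Prop) (u : ℕ → V) (k : ℕ) : Prop :=
  ∀ i, i < k → Arc (u i) (u (i + 1))

/-- The energetic cost `δ_{B,b}(s,t)`: the minimum of `d_{B,b}(P)` over all `s`–`t`
paths `P` (`∞` if there is none). -/
noncomputable def deltaE {V : Type*} (Arc : V → V → Prop) (c : V → V → ℝ)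
    (B b : ℝ) (s t : V) : EReal :=
  sInf { x : EReal | ∃ (u : ℕ → V) (k : ℕ), IsPath Arc u k ∧ u 0 = s ∧ u k = t ∧
    x = dE B b (fun i => c (u i) (u (i + 1))) k }

/-- The standard distance `δ(s,t)`: the infimum of total costs of `s`–`t` paths. -/
noncomputable def distE {V : Type*} (Arc : V → V → Prop) (c : V → V → ℝ)
    (s t : V) : EReal :=
  sInf { x : EReal | ∃ (u : ℕ → V) (k : ℕ), IsPath Arc u k ∧ u 0 = s ∧ u k = t ∧
    x = ((∑ i ∈ Finset.range k, c (u i) (u (i + 1)) : ℝ) : EReal) }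

/-- The graph has no negative cycles. -/
def NoNegCycles {V : Type*} (Arc : V → V → Prop) (c : V → V → ℝ) : Prop :=
  ∀ (u : ℕ → V) (k : ℕ), IsPath Arc u k → u k = u 0 → 1 ≤ k →
    0 ≤ ∑ i ∈ Finset.range k, c (u i) (u (i + 1))

lemma batt_congr {B b : ℝ} {d e : ℕ → ℝ} {m : ℕ} (h : ∀ r, r < m → d r = e r) :
    batt B b d m = batt B b e m := by
  induction m with
  | zero => rfl
  | succ m ih =>
      simp only [batt, ih (fun r hr => h r (by omega)), h m (by omega)]

lemma Trav_congr {B b : ℝ} {d e : ℕ → ℝ} {k : ℕ} (h : ∀ r, r < k → d r = e r) :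
    Trav B b d k ↔ Trav B b e k := by
  constructor <;> intro hT i hi
  · rw [← h i hi, ← batt_congr (fun r (hr : r < i) => h r (by omega))]; exact hT i hi
  · rw [h i hi, batt_congr (fun r (hr : r < i) => h r (by omega))]; exact hT i hi

lemma dE_congr {B b : ℝ} {d e : ℕ → ℝ} {k : ℕ} (h : ∀ r, r < k → d r = e r) :
    dE B b d k = dE B b e k := by
  unfold dE
  by_cases hT : Trav B b d k
  · rw [if_pos hT, if_pos ((Trav_congr h).1 hT), batt_congr h]
  · rw [if_neg hT, if_neg (fun h' => hT ((Trav_congr h).2 h'))]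

lemma batt_mono {B : ℝ} {d : ℕ → ℝ} {b b' : ℝ} (hb : b ≤ b') (m : ℕ) :
    batt B b d m ≤ batt B b' d m := by
  induction m with
  | zero => exact hb
  | succ m ih =>
      simp only [batt]
      exact min_le_min (by linarith) le_rfl

lemma Trav_mono {B : ℝ} {d : ℕ → ℝ} {b b' : ℝ} (hb : b ≤ b') {k : ℕ}
    (hT : Trav B b d k) : Trav B b' d k :=
  fun i hi => le_trans (hT i hi) (batt_mono hb i)

lemma batt_add {B b : ℝ} {d : ℕ → ℝ} {p : ℕ} (m : ℕ) :
    batt B b d (p + m) = batt B (batt B b d p) (fun r => d (p + r)) m := by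
  induction m with
  | zero => rfl
  | succ m ih =>
      show batt B b d (p + m + 1) = _
      simp only [batt, ih]

lemma batt_le {B b : ℝ} {d : ℕ → ℝ} (m : ℕ) :
    batt B b d m ≤ b - ∑ r ∈ Finset.range m, d r := by
  induction m with
  | zero => simp [batt]
  | succ m ih =>
      simp only [batt, Finset.sum_range_succ]
      exact le_trans (min_le_left _ _) (by linarith)

lemma batt_bounds {B b : ℝ} {d : ℕ → ℝ} {k : ℕ} (hb0 : 0 ≤ b) (hbB : b ≤ B)
    (hT : Trav B b d k) : ∀ i, i ≤ k → 0 ≤ batt B b d i ∧ batt B b d i ≤ B := by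
  intro i
  induction i with
  | zero => exact fun _ => ⟨hb0, hbB⟩
  | succ i ih =>
      intro hi
      obtain ⟨h0, h1⟩ := ih (by omega)
      have hc := hT i (by omega)
      simp only [batt]
      exact ⟨le_min (by linarith) (by linarith), min_le_right _ _⟩

lemma eplus_top {B : ℝ} {cc : ℝ} : eplus B ⊤ (cc : EReal) = ⊤ := by
  unfold eplus
  rw [EReal.top_add_coe]
  rw [if_neg (by simp), if_neg (by simp)]

lemma Trav_of_succ {B b : ℝ} {d : ℕ → ℝ} {k : ℕ} (h : Trav B b d (k+1)) :
    Trav B b d k := fun i hi => h i (by omega)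

lemma dE_extend {B : ℝ} (hB : 0 < B) (d : ℕ → ℝ) (k : ℕ) :
    dE B B d (k + 1) = eplus B (dE B B d k) ((d k : ℝ) : EReal) := by
  by_cases hT : Trav B B d k
  · have hb := batt_bounds (le_of_lt hB) le_rfl hT k le_rfl
    set bk := batt B B d k with hbk
    simp only [dE, if_pos hT, ← hbk]
    have coe_add : ((B - bk : ℝ) : EReal) + ((d k : ℝ) : EReal)
        = ((B - bk + d k : ℝ) : EReal) := by norm_cast
    unfold eplus
    rw [coe_add]
    rcases lt_or_ge (B - bk + d k) 0 with hlt | hge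
    · -- sum < 0 : eplus = 0, battery full
      have hdk : d k ≤ bk := by linarith [hb.2]
      have hT1 : Trav B B d (k+1) := by
        intro i hi
        rcases Nat.lt_succ_iff_lt_or_eq.1 hi with h' | h'
        · exact hT i h'
        · rw [h']; exact hdk
      rw [if_pos hT1]
      have hbatt : batt B B d (k+1) = B := by
        simp only [batt, ← hbk]
        rw [min_eq_right (by linarith)]
      rw [hbatt, if_pos (by exact_mod_cast hlt)]
      norm_num
    · rcases le_or_gt (B - bk + d k) B with hle | hgt
      · -- 0 ≤ sum ≤ B
        have hdk : d k ≤ bk := by linarith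
        have hT1 : Trav B B d (k+1) := by
          intro i hi
          rcases Nat.lt_succ_iff_lt_or_eq.1 hi with h' | h'
          · exact hT i h'
          · rw [h']; exact hdk
        rw [if_pos hT1]
        have hbatt : batt B B d (k+1) = bk - d k := by
          simp only [batt, ← hbk]
          rw [min_eq_left (by linarith)]
        rw [hbatt, if_neg (by exact_mod_cast not_lt.2 hge),
          if_pos (by exact_mod_cast hle)]
        norm_num
        norm_cast
        ring
      · -- sum > B : not traversable
        have hdk : bk < d k := by linarith
        have hT1 : ¬ Trav B B d (k+1) := by
          intro h
          have := h k (by omega)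
          rw [← hbk] at this
          linarith
        rw [if_neg hT1, if_neg (by exact_mod_cast not_lt.2 hge),
          if_neg (by exact_mod_cast not_le.2 hgt)]
  · have hT1 : ¬ Trav B B d (k+1) := fun h => hT (Trav_of_succ h)
    simp only [dE, if_neg hT1, if_neg hT, eplus_top]

lemma reduce {V : Type*} [Fintype V] (Arc : V → V → Prop) (c : V → V → ℝ)
    (hNC : NoNegCycles Arc c) (B : ℝ) :
    ∀ k (u : ℕ → V), IsPath Arc u k →
      ∃ (u' : ℕ → V) (k' : ℕ), k' ≤ Fintype.card V ∧ IsPath Arc u' k' ∧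
        u' 0 = u 0 ∧ u' k' = u k ∧
        dE B B (fun i => c (u' i) (u' (i+1))) k' ≤ dE B B (fun i => c (u i) (u (i+1))) k := by
  intro k
  induction k using Nat.strong_induction_on with
  | _ k IH =>
  intro u hu
  by_cases hk : k ≤ Fintype.card V
  · exact ⟨u, k, hk, hu, rfl, rfl, le_rfl⟩
  · -- pigeonhole: find repeated vertex
    obtain ⟨a, b, hab, heq⟩ := Fintype.exists_ne_map_eq_of_card_lt
      (fun m : Fin (k+1) => u m) (by simp; omega)
    -- wlog a < b
    obtain ⟨i, j, hij, hjk, huij⟩ : ∃ i j : ℕ, i < j ∧ j ≤ k ∧ u i = u j := by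
      rcases lt_or_gt_of_ne (Fin.val_ne_of_ne hab) with h | h
      · exact ⟨a, b, h, by omega, heq⟩
      · exact ⟨b, a, h, by omega, heq.symm⟩
    obtain ⟨dd, hdd, hj⟩ : ∃ dd, 1 ≤ dd ∧ j = i + dd := ⟨j - i, by omega, by omega⟩
    obtain ⟨q, hq⟩ : ∃ q, k = j + q := ⟨k - j, by omega⟩
    set cst : ℕ → ℝ := fun m => c (u m) (u (m+1)) with hcst
    set u' : ℕ → V := fun m => if m ≤ i then u m else u (m + dd) with hu'
    set k' : ℕ := i + q with hk'
    set cst' : ℕ → ℝ := fun m => c (u' m) (u' (m+1)) with hcst'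
    -- basic facts about u'
    have hu'lo : ∀ m, m ≤ i → u' m = u m := fun m hm => if_pos hm
    have hu'hi : ∀ m, i ≤ m → u' m = u (m + dd) := by
      intro m hm
      rcases eq_or_lt_of_le hm with h | h
      · rw [hu']; simp only [← h, if_pos le_rfl]
        rw [huij, hj]
      · exact if_neg (by omega)
    have hcst'lo : ∀ m, m < i → cst' m = cst m := by
      intro m hm
      simp only [hcst', hcst, hu'lo m (by omega), hu'lo (m+1) (by omega)]
    have hcst'hi : ∀ m, i ≤ m → cst' m = cst (m + dd) := by
      intro m hm
      have h3 : m + 1 + dd = m + dd + 1 := by omega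
      simp only [hcst', hcst, hu'hi m hm, hu'hi (m+1) (by omega), h3]
    have hpath' : IsPath Arc u' k' := by
      intro m hm
      rcases lt_or_ge m i with h | h
      · rw [hu'lo m (by omega), hu'lo (m+1) (by omega)]
        exact hu m (by omega)
      · rw [hu'hi m h, hu'hi (m+1) (by omega)]
        have h3 : m + 1 + dd = m + dd + 1 := by omega
        rw [h3]
        exact hu (m + dd) (by omega)
    -- cycle nonnegativity
    have hcyc : 0 ≤ ∑ r ∈ Finset.range dd, cst (i + r) := by
      have := hNC (fun r => u (i + r)) dd
        (fun r hr => by simpa [Nat.add_assoc] using hu (i + r) (by omega))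
        (by show u (i + dd) = u (i + 0); rw [Nat.add_zero, ← hj, ← huij]) hdd
      refine le_trans this (le_of_eq (Finset.sum_congr rfl ?_))
      intro r _
      simp [hcst, Nat.add_assoc]
    -- charges
    have hbi : batt B B cst' i = batt B B cst i := batt_congr (fun r hr => hcst'lo r hr)
    have hbj : batt B B cst (i + dd) ≤ batt B B cst i := by
      rw [batt_add dd]
      refine le_trans (batt_le dd) (by linarith)
    have hshift : ∀ m, batt B B cst' (i + m)
        = batt B (batt B B cst i) (fun r => cst (i + dd + r)) m := by
      intro m
      rw [batt_add m, hbi]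
      exact batt_congr (fun r _ => by rw [hcst'hi (i + r) (by omega)]; ring_nf)
    have hbattge : ∀ m, batt B B cst (i + dd + m) ≤ batt B B cst' (i + m) := by
      intro m
      rw [hshift m, batt_add m]
      exact batt_mono (by simpa using hbj) m
    -- main inequality
    have hdE : dE B B cst' k' ≤ dE B B cst k := by
      by_cases hT : Trav B B cst k
      · have hT' : Trav B B cst' k' := by
          intro m hm
          rcases lt_or_ge m i with h | h
          · rw [hcst'lo m h, batt_congr (fun r (hr : r < m) => hcst'lo r (by omega))]
            exact hT m (by omega)
          · obtain ⟨r, hr⟩ : ∃ r, m = i + r := ⟨m - i, by omega⟩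
            subst hr
            rw [hcst'hi (i + r) (by omega)]
            refine le_trans ?_ (hbattge r)
            have : i + r + dd = i + dd + r := by ring
            rw [this]
            exact hT (i + dd + r) (by omega)
        simp only [dE, if_pos hT', if_pos hT]
        have : batt B B cst k ≤ batt B B cst' k' := by
          have h1 := hbattge q
          have : i + dd + q = k := by omega
          rwa [this] at h1
        exact EReal.coe_le_coe_iff.2 (by linarith)
      · simp only [dE, if_neg hT]; exact le_top
    -- endpoints
    have hend0 : u' 0 = u 0 := hu'lo 0 (by omega)
    have hendk : u' k' = u k := by
      rcases Nat.eq_zero_or_pos q with h | h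
      · subst h
        have hkj : k = j := by omega
        rw [hk', Nat.add_zero, hu'lo i le_rfl, huij, hkj]
      · rw [hu'hi k' (by omega)]
        congr 1
        omega
    -- recurse
    obtain ⟨u'', k'', hle'', hpath'', h0'', hk'', hdE''⟩ := IH k' (by omega) u' hpath'
    exact ⟨u'', k'', hle'', hpath'', by rw [h0'', hend0], by rw [hk'', hendk],
      le_trans hdE'' hdE⟩

/-- The minimum in `deltaE` is attained when some path exists. -/
lemma deltaE_attained {V : Type*} [Fintype V] (Arc : V → V → Prop) (c : V → V → ℝ)
    (hNC : NoNegCycles Arc c) (B : ℝ) (s t : V)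
    (hne : ∃ (w : ℕ → V) (k : ℕ), IsPath Arc w k ∧ w 0 = s ∧ w k = t) :
    ∃ (w : ℕ → V) (k : ℕ), IsPath Arc w k ∧ w 0 = s ∧ w k = t ∧
      dE B B (fun i => c (w i) (w (i + 1))) k = deltaE Arc c B B s t := by
  classical
  set n := Fintype.card V with hn
  have hnpos : 0 < n := Fintype.card_pos_iff.2 ⟨s⟩
  set S : Set EReal := { x : EReal | ∃ (w : ℕ → V) (k : ℕ), IsPath Arc w k ∧ w 0 = s ∧
    w k = t ∧ x = dE B B (fun i => c (w i) (w (i + 1))) k } with hS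
  set T : Set EReal := { x : EReal | ∃ (w : ℕ → V) (k : ℕ), k ≤ n ∧ IsPath Arc w k ∧
    w 0 = s ∧ w k = t ∧ x = dE B B (fun i => c (w i) (w (i + 1))) k } with hT
  have hTS : T ⊆ S := by
    rintro x ⟨w, k, -, h1, h2, h3, h4⟩
    exact ⟨w, k, h1, h2, h3, h4⟩
  have hdom : ∀ x ∈ S, ∃ y ∈ T, y ≤ x := by
    rintro x ⟨w, k, h1, h2, h3, rfl⟩
    obtain ⟨w', k', hle, hp, h0, hk, hdE⟩ := reduce Arc c hNC B k w h1
    exact ⟨_, ⟨w', k', hle, hp, by rw [h0, h2], by rw [hk, h3], rfl⟩, hdE⟩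
  -- T is finite
  have hTfin : T.Finite := by
    have : T ⊆ Set.range (fun p : (Fin (n+1) → V) × Fin (n+1) =>
        dE B B (fun i => c (p.1 ⟨min i n, by omega⟩) (p.1 ⟨min (i+1) n, by omega⟩)) p.2) := by
      rintro x ⟨w, k, hkn, -, -, -, rfl⟩
      refine ⟨(fun m => w m.val, ⟨k, by omega⟩), ?_⟩
      simp only
      refine (dE_congr ?_).symm
      intro r hr
      have h1 : min r n = r := by omega
      have h2 : min (r+1) n = r + 1 := by omega
      simp [h1, h2]
    exact Set.Finite.subset (Set.finite_range _) this
  -- sInf S = sInf T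
  have hSne : S.Nonempty := by
    obtain ⟨w, k, h1, h2, h3⟩ := hne
    exact ⟨_, ⟨w, k, h1, h2, h3, rfl⟩⟩
  have hTne : T.Nonempty := by
    obtain ⟨x, hx⟩ := hSne
    obtain ⟨y, hy, -⟩ := hdom x hx
    exact ⟨y, hy⟩
  have hinf : sInf S = sInf T := by
    refine le_antisymm (sInf_le_sInf hTS) (le_sInf ?_)
    intro x hx
    obtain ⟨y, hy, hle⟩ := hdom x hx
    exact le_trans (sInf_le hy) hle
  have hmem : sInf T ∈ T := Set.Nonempty.csInf_mem hTne hTfin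
  obtain ⟨w, k, -, h1, h2, h3, h4⟩ := hmem
  refine ⟨w, k, h1, h2, h3, ?_⟩
  rw [← h4, deltaE, ← hS, hinf]

/-- triangle inequality for energetic costs: in a finite graph with no
negative cycles, for every arc `uv`, `δ_B(s,v) ≤ δ_B(s,u) ⊕_B c(uv)`. -/
theorem delta_triangle {V : Type*} [Fintype V] (Arc : V → V → Prop)
    (c : V → V → ℝ) (hNC : NoNegCycles Arc c) (B : ℝ) (hB : 0 < B) (s : V)
    (u v : V) (huv : Arc u v) :
    deltaE Arc c B B s v ≤ eplus B (deltaE Arc c B B s u) ((c u v : ℝ) : EReal) := by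
  classical
  by_cases hne : ∃ (w : ℕ → V) (k : ℕ), IsPath Arc w k ∧ w 0 = s ∧ w k = u
  · obtain ⟨w, k, hp, h0, hk, hdE⟩ := deltaE_attained Arc c hNC B s u hne
    set w1 : ℕ → V := fun m => if m ≤ k then w m else v with hw1
    have hw1lo : ∀ m, m ≤ k → w1 m = w m := fun m hm => if_pos hm
    have hw1k1 : w1 (k+1) = v := if_neg (by omega)
    have hp1 : IsPath Arc w1 (k+1) := by
      intro m hm
      rcases Nat.lt_succ_iff_lt_or_eq.1 hm with h | h
      · rw [hw1lo m (by omega), hw1lo (m+1) (by omega)]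
        exact hp m h
      · subst h
        rw [hw1lo m le_rfl, hw1k1, hk]
        exact huv
    have hcongr : ∀ r, r < k → c (w1 r) (w1 (r+1)) = c (w r) (w (r+1)) := by
      intro r hr
      rw [hw1lo r (by omega), hw1lo (r+1) (by omega)]
    have hck : c (w1 k) (w1 (k+1)) = c u v := by
      rw [hw1lo k le_rfl, hw1k1, hk]
    have hle : deltaE Arc c B B s v ≤ dE B B (fun i => c (w1 i) (w1 (i+1))) (k+1) :=
      sInf_le ⟨w1, k+1, hp1, by rw [hw1lo 0 (by omega), h0], hw1k1, rfl⟩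
    refine le_trans hle ?_
    rw [dE_extend hB, hck, dE_congr hcongr, hdE]
  · have hS : { x : EReal | ∃ (w : ℕ → V) (k : ℕ), IsPath Arc w k ∧ w 0 = s ∧ w k = u ∧
        x = dE B B (fun i => c (w i) (w (i + 1))) k } = ∅ := by
      ext x
      simp only [Set.mem_setOf_eq, Set.mem_empty_iff_false, iff_false]
      rintro ⟨w, k, h1, h2, h3, -⟩
      exact hne ⟨w, k, h1, h2, h3⟩
    have htop : deltaE Arc c B B s u = ⊤ := by rw [deltaE, hS, sInf_empty]
    rw [htop, eplus_top]
    exact le_top
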